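/- Let n ≥ 1 and let h₁, h₂ ∈ ℂ^n be nonzero vectors. Then the supremum of |h₂ᴴWh₁|² / (‖Wᴴh₂‖² + 1) over all matrices W ∈ ℂ^{n×n} satisfying ‖Wh₁‖² + ‖W‖_F² = 1 equals ‖h₁‖²‖h₂‖² / (1 + ‖h₁‖² + ‖h₂‖²), and this supremum is attained by the rank-one matrix W = (1 + ‖h₁‖²)^{-1/2} · ĥ₂ĥ₁ᴴ, where ĥ₁ = h₁/‖h₁‖ and ĥ₂ = h₂/‖h₂‖. -/

import Mathlib

/-- Euclidean norm of a complex vector. -/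
noncomputable def cnorm {k : ℕ} (v : Fin k → ℂ) : ℝ :=
  Real.sqrt (∑ i, ‖v i‖ ^ 2)

/-- Squared Frobenius norm of a complex matrix. -/
noncomputable def frobSq {p q : ℕ} (A : Matrix (Fin p) (Fin q) ℂ) : ℝ :=
  ∑ i, ∑ j, ‖A i j‖ ^ 2

lemma cnorm_sq {k : ℕ} (v : Fin k → ℂ) : cnorm v ^ 2 = ∑ i, ‖v i‖ ^ 2 :=
  Real.sq_sqrt (Finset.sum_nonneg fun i _ => by positivity)

lemma cnorm_pos {k : ℕ} (v : Fin k → ℂ) (hv : v ≠ 0) : 0 < cnorm v := by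
  rcases Function.ne_iff.1 hv with ⟨i, hi⟩
  apply Real.sqrt_pos.2
  apply Finset.sum_pos' (fun j _ => by positivity)
  exact ⟨i, Finset.mem_univ i, pow_pos (norm_pos_iff.2 hi) 2⟩

lemma cnorm_sq_smul (t : ℝ) {k : ℕ} (v : Fin k → ℂ) :
    cnorm (fun i => (t : ℂ) * v i) ^ 2 = t ^ 2 * cnorm v ^ 2 := by
  rw [cnorm_sq, cnorm_sq, Finset.mul_sum]
  refine Finset.sum_congr rfl fun i _ => ?_
  rw [norm_mul, mul_pow, Complex.norm_real, Real.norm_eq_abs, sq_abs]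

lemma sum_conj_mul {k : ℕ} (v : Fin k → ℂ) :
    ∑ i, (starRingEnd ℂ) (v i) * v i = ((cnorm v ^ 2 : ℝ) : ℂ) := by
  rw [cnorm_sq]
  push_cast
  exact Finset.sum_congr rfl fun i _ => by rw [RCLike.conj_mul]; norm_cast

lemma cs {k : ℕ} (u v : Fin k → ℂ) :
    ‖dotProduct (star u) v‖ ^ 2 ≤ (∑ i, ‖u i‖ ^ 2) * (∑ i, ‖v i‖ ^ 2) := by
  set eu : EuclideanSpace ℂ (Fin k) := (WithLp.equiv 2 (Fin k → ℂ)).symm u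
  set ev : EuclideanSpace ℂ (Fin k) := (WithLp.equiv 2 (Fin k → ℂ)).symm v
  have h : dotProduct (star u) v = inner (𝕜 := ℂ) eu ev := by
    simp [dotProduct, PiLp.inner_apply, RCLike.inner_apply, eu, ev, mul_comm]
  have h1 : (∑ i, ‖u i‖ ^ 2) = ‖eu‖ ^ 2 := by
    rw [EuclideanSpace.norm_eq, Real.sq_sqrt (Finset.sum_nonneg fun i _ => by positivity)]; rfl
  have h2 : (∑ i, ‖v i‖ ^ 2) = ‖ev‖ ^ 2 := by
    rw [EuclideanSpace.norm_eq, Real.sq_sqrt (Finset.sum_nonneg fun i _ => by positivity)]; rfl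
  rw [h, h1, h2, ← mul_pow]
  exact pow_le_pow_left₀ (norm_nonneg _) (norm_inner_le_norm _ _) 2

lemma swap_dot {k : ℕ} (h₁ h₂ : Fin k → ℂ) (W : Matrix (Fin k) (Fin k) ℂ) :
    dotProduct (star h₂) (W.mulVec h₁)
      = dotProduct (star ((W.conjTranspose).mulVec h₂)) h₁ := by
  simp only [dotProduct, Matrix.mulVec, Pi.star_apply, Matrix.conjTranspose_apply,
    dotProduct, map_sum, map_mul, RingHomCompTriple.comp_apply, RCLike.star_def,
    starRingEnd_self_apply, Finset.mul_sum, Finset.sum_mul]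
  rw [Finset.sum_comm]
  apply Finset.sum_congr rfl; intro i _
  apply Finset.sum_congr rfl; intro j _
  simp only [RingHom.id_apply]; ring

lemma row_bound {k : ℕ} (h₁ : Fin k → ℂ) (W : Matrix (Fin k) (Fin k) ℂ) :
    cnorm (W.mulVec h₁) ^ 2 ≤ (∑ i, ‖h₁ i‖ ^ 2) * frobSq W := by
  rw [cnorm_sq, frobSq, Finset.mul_sum]
  apply Finset.sum_le_sum
  intro i _
  have := cs (star (W i)) h₁
  simp only [star_star] at this
  calc ‖(W.mulVec h₁) i‖ ^ 2 = ‖dotProduct (W i) h₁‖ ^ 2 := rfl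
    _ ≤ (∑ j, ‖star (W i) j‖ ^ 2) * (∑ j, ‖h₁ j‖ ^ 2) := this
    _ = (∑ j, ‖h₁ j‖ ^ 2) * ∑ j, ‖W i j‖ ^ 2 := by
        simp only [Pi.star_apply, norm_star]; ring

lemma upper {k : ℕ} (h₁ h₂ : Fin k → ℂ) (W : Matrix (Fin k) (Fin k) ℂ)
    (hc : cnorm (W.mulVec h₁) ^ 2 + frobSq W = 1) :
    ‖dotProduct (star h₂) (W.mulVec h₁)‖ ^ 2 /
        (cnorm ((W.conjTranspose).mulVec h₂) ^ 2 + 1) ≤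
      cnorm h₁ ^ 2 * cnorm h₂ ^ 2 / (1 + cnorm h₁ ^ 2 + cnorm h₂ ^ 2) := by
  set a := cnorm h₁ ^ 2 with ha'
  set b := cnorm h₂ ^ 2 with hb'
  set u := cnorm (W.mulVec h₁) ^ 2 with hu'
  set t := cnorm ((W.conjTranspose).mulVec h₂) ^ 2 with ht'
  set f := frobSq W with hf'
  set s := ‖dotProduct (star h₂) (W.mulVec h₁)‖ ^ 2 with hs'
  have ha : 0 ≤ a := sq_nonneg _
  have hb : 0 ≤ b := sq_nonneg _
  have hu : 0 ≤ u := sq_nonneg _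
  have ht : 0 ≤ t := sq_nonneg _
  have hsbu : s ≤ b * u := by
    rw [hs', hb', hu', cnorm_sq, cnorm_sq]; exact cs h₂ (W.mulVec h₁)
  have hsat : s ≤ t * a := by
    rw [hs', swap_dot, ht', ha', cnorm_sq, cnorm_sq]
    exact cs ((W.conjTranspose).mulVec h₂) h₁
  have huaf : u ≤ a * f := by
    rw [hu', ha', hf', cnorm_sq h₁]; exact row_bound h₁ W
  rw [div_le_div_iff₀ (by positivity) (by positivity)]
  nlinarith [mul_le_mul_of_nonneg_left hsat hb,
    mul_le_mul_of_nonneg_left hsbu (by positivity : (0:ℝ) ≤ 1 + a), mul_nonneg ha hb]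

/-- For nonzero `h₁, h₂ ∈ ℂ^n`, the supremum of `|h₂ᴴWh₁|² / (‖Wᴴh₂‖² + 1)` over
matrices `W` with `‖Wh₁‖² + ‖W‖_F² = 1` equals `‖h₁‖²‖h₂‖² / (1 + ‖h₁‖² + ‖h₂‖²)`, and
it is attained by the rank-one matrix `W₀ = (1 + ‖h₁‖²)^{-1/2} ĥ₂ ĥ₁ᴴ`. -/
theorem stmt3 (n : ℕ) (hn : 1 ≤ n) (h₁ h₂ : Fin n → ℂ) (hh₁ : h₁ ≠ 0) (hh₂ : h₂ ≠ 0)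
    (W₀ : Matrix (Fin n) (Fin n) ℂ)
    (hW₀ : W₀ = ((Real.sqrt (1 + cnorm h₁ ^ 2))⁻¹ : ℂ) •
      Matrix.vecMulVec (((cnorm h₂ : ℂ))⁻¹ • h₂) (star (((cnorm h₁ : ℂ))⁻¹ • h₁))) :
    (sSup {x : ℝ | ∃ W : Matrix (Fin n) (Fin n) ℂ,
        cnorm (W.mulVec h₁) ^ 2 + frobSq W = 1 ∧
        x = ‖dotProduct (star h₂) (W.mulVec h₁)‖ ^ 2 /
            (cnorm ((W.conjTranspose).mulVec h₂) ^ 2 + 1)} =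
      cnorm h₁ ^ 2 * cnorm h₂ ^ 2 / (1 + cnorm h₁ ^ 2 + cnorm h₂ ^ 2)) ∧
    (cnorm (W₀.mulVec h₁) ^ 2 + frobSq W₀ = 1) ∧
    (‖dotProduct (star h₂) (W₀.mulVec h₁)‖ ^ 2 /
        (cnorm ((W₀.conjTranspose).mulVec h₂) ^ 2 + 1) =
      cnorm h₁ ^ 2 * cnorm h₂ ^ 2 / (1 + cnorm h₁ ^ 2 + cnorm h₂ ^ 2)) := by
  set α := cnorm h₁ with hαdef
  set β := cnorm h₂ with hβdef
  have hα : 0 < α := cnorm_pos _ hh₁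
  have hβ : 0 < β := cnorm_pos _ hh₂
  have hαC : (α : ℂ) ≠ 0 := by exact_mod_cast hα.ne'
  have hβC : (β : ℂ) ≠ 0 := by exact_mod_cast hβ.ne'
  set K : ℝ := 1 + α ^ 2 with hKdef
  have hK : 0 < K := by positivity
  set c : ℝ := (Real.sqrt K)⁻¹ with hcdef
  have hc2 : c ^ 2 = K⁻¹ := by rw [hcdef, inv_pow, Real.sq_sqrt hK.le]
  have hE : ∀ i j, W₀ i j
      = (c : ℂ) * ((β : ℂ)⁻¹ * h₂ i) * ((α : ℂ)⁻¹ * (starRingEnd ℂ) (h₁ j)) := by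
    intro i j
    rw [hW₀]
    simp [Matrix.vecMulVec_apply, Pi.smul_apply, smul_eq_mul, Pi.star_apply, star_mul',
      map_inv₀, Complex.conj_ofReal, RCLike.star_def]
    rw [Complex.ofReal_inv]
    ring
  have hmul : W₀.mulVec h₁ = fun i => ((c * α * β⁻¹ : ℝ) : ℂ) * h₂ i := by
    funext i
    show ∑ j, W₀ i j * h₁ j = _
    calc ∑ j, W₀ i j * h₁ j
        = ((c : ℂ) * (β : ℂ)⁻¹ * (α : ℂ)⁻¹ * h₂ i) * ∑ j, (starRingEnd ℂ) (h₁ j) * h₁ j := by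
          rw [Finset.mul_sum]
          exact Finset.sum_congr rfl fun j _ => by rw [hE]; ring
      _ = _ := by rw [sum_conj_mul, ← hαdef]; push_cast; field_simp
  have hu0 : cnorm (W₀.mulVec h₁) ^ 2 = c ^ 2 * α ^ 2 := by
    rw [hmul, cnorm_sq_smul, ← hβdef]
    field_simp
  have hfrob : frobSq W₀ = c ^ 2 := by
    have h1 : frobSq W₀ = (c * β⁻¹ * α⁻¹) ^ 2 * ((∑ i, ‖h₂ i‖ ^ 2) * (∑ j, ‖h₁ j‖ ^ 2)) := by
      rw [frobSq, Finset.sum_mul_sum, Finset.mul_sum]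
      refine Finset.sum_congr rfl fun i _ => ?_
      rw [Finset.mul_sum]
      refine Finset.sum_congr rfl fun j _ => ?_
      rw [hE]
      simp [norm_mul, norm_inv, Complex.norm_real, mul_pow, inv_pow, Real.norm_eq_abs, sq_abs,
        Complex.sq_norm]
      ring
    rw [h1, ← cnorm_sq, ← cnorm_sq, ← hαdef, ← hβdef]
    field_simp
  have hcon : cnorm (W₀.mulVec h₁) ^ 2 + frobSq W₀ = 1 := by
    rw [hu0, hfrob, hc2]
    field_simp [hKdef]
    ring
  have hdot : dotProduct (star h₂) (W₀.mulVec h₁) = ((c * α * β⁻¹ * β ^ 2 : ℝ) : ℂ) := by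
    rw [hmul]
    show ∑ i, star (h₂ i) * (((c * α * β⁻¹ : ℝ) : ℂ) * h₂ i) = _
    calc ∑ i, star (h₂ i) * (((c * α * β⁻¹ : ℝ) : ℂ) * h₂ i)
        = ((c * α * β⁻¹ : ℝ) : ℂ) * ∑ i, (starRingEnd ℂ) (h₂ i) * h₂ i := by
          rw [Finset.mul_sum]
          exact Finset.sum_congr rfl fun i _ => by rw [RCLike.star_def]; ring
      _ = _ := by rw [sum_conj_mul, ← hβdef]; push_cast; ring
  have hs0 : ‖dotProduct (star h₂) (W₀.mulVec h₁)‖ ^ 2 = c ^ 2 * α ^ 2 * β ^ 2 := by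
    rw [hdot, Complex.norm_real, Real.norm_eq_abs, sq_abs]
    field_simp
  have hmul2 : (W₀.conjTranspose).mulVec h₂ = fun j => ((c * β * α⁻¹ : ℝ) : ℂ) * h₁ j := by
    funext j
    show ∑ i, (starRingEnd ℂ) (W₀ i j) * h₂ i = _
    calc ∑ i, (starRingEnd ℂ) (W₀ i j) * h₂ i
        = ((c : ℂ) * (β : ℂ)⁻¹ * (α : ℂ)⁻¹ * h₁ j) * ∑ i, (starRingEnd ℂ) (h₂ i) * h₂ i := by
          rw [Finset.mul_sum]
          refine Finset.sum_congr rfl fun i _ => ?_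
          rw [hE]
          simp [map_mul, map_inv₀, Complex.conj_ofReal]
          ring
      _ = _ := by rw [sum_conj_mul, ← hβdef]; push_cast; field_simp
  have ht0 : cnorm ((W₀.conjTranspose).mulVec h₂) ^ 2 = c ^ 2 * β ^ 2 := by
    rw [hmul2, cnorm_sq_smul, ← hαdef]
    field_simp
  have hval : ‖dotProduct (star h₂) (W₀.mulVec h₁)‖ ^ 2 /
      (cnorm ((W₀.conjTranspose).mulVec h₂) ^ 2 + 1) = α ^ 2 * β ^ 2 / (1 + α ^ 2 + β ^ 2) := by
    rw [hs0, ht0, hc2, hKdef]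
    have h1 : (0:ℝ) < 1 + α ^ 2 := by positivity
    field_simp
    ring
  refine ⟨?_, hcon, hval⟩
  have hmem : α ^ 2 * β ^ 2 / (1 + α ^ 2 + β ^ 2) ∈
      {x : ℝ | ∃ W : Matrix (Fin n) (Fin n) ℂ,
        cnorm (W.mulVec h₁) ^ 2 + frobSq W = 1 ∧
        x = ‖dotProduct (star h₂) (W.mulVec h₁)‖ ^ 2 /
            (cnorm ((W.conjTranspose).mulVec h₂) ^ 2 + 1)} :=
    ⟨W₀, hcon, hval.symm⟩
  have hub : ∀ x ∈ {x : ℝ | ∃ W : Matrix (Fin n) (Fin n) ℂ,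
        cnorm (W.mulVec h₁) ^ 2 + frobSq W = 1 ∧
        x = ‖dotProduct (star h₂) (W.mulVec h₁)‖ ^ 2 /
            (cnorm ((W.conjTranspose).mulVec h₂) ^ 2 + 1)},
      x ≤ α ^ 2 * β ^ 2 / (1 + α ^ 2 + β ^ 2) := by
    rintro x ⟨W, hw, rfl⟩
    exact upper h₁ h₂ W hw
  exact le_antisymm (csSup_le ⟨_, hmem⟩ hub) (le_csSup ⟨_, hub⟩ hmem)
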